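/- Let ω ∈ ℝ^k, let T₀ be the closure in G of {E'(tω/r) : t ∈ ℝ}, and set K := {u ∈ (ℤ/rℤ)^k : (γ̄^u)^{-1}·E'(u/r) ∈ T₀}. Then K is a subgroup of (ℤ/rℤ)^k, it is exactly the subgroup of those deck transformations Ψ_u(α, g) = (α + u/r, g·(γ̄^u)^{-1}·E'(u/r)) of the covering j' that map T^k × T₀ to itself, and for every g ∈ G the restriction of j' identifies P'_{g·m̄} := j'(T^k × gT₀) with the quotient of T^k × gT₀ by the induced action of K. -/

import Mathlib

open scoped Manifold
open Function Set Topology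

noncomputable section

/-- The standard `n`-torus `Tⁿ = ℝⁿ/ℤⁿ`. -/
abbrev Torus (n : ℕ) : Type := Fin n → AddCircle (1 : ℝ)

/-- The canonical projection `ℝⁿ → Tⁿ`. -/
def toTorus {n : ℕ} (x : Fin n → ℝ) : Torus n := fun i => (x i : AddCircle (1 : ℝ))

/-- A vector in `ℝⁿ` is nonresonant if its components are linearly independent over `ℤ`
(equivalently, over `ℚ`). -/
def Nonresonant {n : ℕ} (ω : Fin n → ℝ) : Prop :=
  ∀ p : Fin n → ℤ, (∑ i, (p i : ℝ) * ω i) = 0 → p = 0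

variable {k : ℕ}
  -- `G` is a compact connected Lie group …
  {EG : Type*} [NormedAddCommGroup EG] [NormedSpace ℝ EG] [FiniteDimensional ℝ EG]
  {HG : Type*} [TopologicalSpace HG] {IG : ModelWithCorners ℝ EG HG}
  {G : Type*} [TopologicalSpace G] [ChartedSpace HG G] [Group G] [IsTopologicalGroup G]
  [LieGroup IG (⊤ : ℕ∞) G] [CompactSpace G] [ConnectedSpace G]
  -- … acting smoothly and freely on a compact smooth manifold `F`
  {EF : Type*} [NormedAddCommGroup EF] [NormedSpace ℝ EF]
  {HF : Type*} [TopologicalSpace HF] {IF : ModelWithCorners ℝ EF HF}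
  {F : Type*} [TopologicalSpace F] [ChartedSpace HF F] [IsManifold IF (⊤ : ℕ∞) F]
  [CompactSpace F] [MulAction G F] [ContinuousSMul G F]

/-- The ordered product `γ₁^{u₁} ⋯ γ_k^{u_k}` (written `γ̄ᵘ` in the paper; the `γᵢ`
commute pairwise, so the order is immaterial). -/
def prodPow {G : Type*} [Monoid G] {k : ℕ} (γ : Fin k → G) (u : Fin k → ℕ) : G :=
  (List.ofFn fun i => γ i ^ u i).prod

/-- The ordered product `γ₁^{u₁} ⋯ γ_k^{u_k}` for integer exponents. -/
def prodZPow {G : Type*} [Group G] {k : ℕ} (γ : Fin k → G) (u : Fin k → ℤ) : G :=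
  (List.ofFn fun i => γ i ^ u i).prod

lemma toTorus_surjective {n : ℕ} : Function.Surjective (toTorus (n := n)) := by
  intro θ
  have h : ∀ i, ∃ a : ℝ, (a : AddCircle (1:ℝ)) = θ i := fun i => Quotient.exists_rep (θ i)
  choose a ha using h
  exact ⟨a, funext ha⟩

/-- **Lemma 8**: with `T₀` the closure of `{E'(tω/r)}`, the set
`K = {u ∈ (ℤ/rℤ)ᵏ : (γ̄ᵘ)⁻¹·E'(u/r) ∈ T₀}` is a subgroup of `(ℤ/rℤ)ᵏ`; it consists exactly
of the deck transformations `Ψ_u` preserving `Tᵏ × T₀`, and for every `g ∈ G` the restriction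
of `ĵ` identifies `P'_{g·m̄} = ĵ(Tᵏ × gT₀)` with the quotient of `Tᵏ × gT₀` by `K`. -/
theorem subgroup_K_and_quotient_description_of_petals
    (hk : 1 ≤ k)
    -- the action of `G` on `F` is smooth and free
    (hactsmooth : ContMDiff (IG.prod IF) IF (⊤ : ℕ∞) fun p : G × F => p.1 • p.2)
    (hfree : ∀ (g : G) (m : F), g • m = m → g = 1)
    -- `Φ` is a smooth action of `(ℝᵏ, +)` on `F` commuting with the `G`-action
    (Φ : (Fin k → ℝ) → F → F)
    (hΦsmooth : ContMDiff ((𝓘(ℝ, Fin k → ℝ)).prod IF) IF (⊤ : ℕ∞) fun p : (Fin k → ℝ) × F => Φ p.1 p.2)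
    (hΦzero : ∀ m, Φ 0 m = m)
    (hΦadd : ∀ (x y : Fin k → ℝ) (m : F), Φ (x + y) m = Φ x (Φ y m))
    (hΦequiv : ∀ (x : Fin k → ℝ) (g : G) (m : F), Φ x (g • m) = g • Φ x m)
    -- (a) `Φ x m` is in the `G`-orbit of `m` iff `x ∈ ℤᵏ`
    (hperiod : ∀ (m : F) (x : Fin k → ℝ),
      (∃ g : G, Φ x m = g • m) ↔ ∃ z : Fin k → ℤ, x = fun i => (z i : ℝ))
    -- (b) any two points of `F` are joined by the flow up to the `G`-action
    (htrans : ∀ m m' : F, ∃ (x : Fin k → ℝ) (g : G), Φ x m = g • m')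
    -- a fixed point `m̄` and the phases `γ̄ᵢ` of the lifts at `m̄`
    (mbar : F) (γbar : Fin k → G)
    (hγbar : ∀ i, Φ (Pi.single i 1) mbar = γbar i • mbar)
    -- a positive integer `r` and an abelian subgroup `A` of `G` containing the `γ̄ᵢ`
    (r : ℕ) (hr : 0 < r)
    (A : Subgroup G) (hAab : ∀ a ∈ A, ∀ b ∈ A, a * b = b * a)
    (hγA : ∀ i, γbar i ∈ A)
    -- `E' : ℝᵏ → G` is a smooth homomorphism with image in `A` and `E' eᵢ = γ̄ᵢʳ`
    (E' : (Fin k → ℝ) → G)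
    (hE'0 : E' 0 = 1)
    (hE'add : ∀ x y, E' (x + y) = E' x * E' y)
    (hE'smooth : ContMDiff (𝓘(ℝ, Fin k → ℝ)) IG (⊤ : ℕ∞) E')
    (hE'A : ∀ x, E' x ∈ A)
    (hE'γ : ∀ i, E' (Pi.single i 1) = γbar i ^ r)
    -- the map `j' (α, g) = g • E'(α)⁻¹ • Φ_{rα} m̄`
    (j' : (Fin k → ℝ) → G → F)
    (hj' : ∀ (α : Fin k → ℝ) (g : G), j' α g = g • (E' α)⁻¹ • Φ ((r : ℝ) • α) mbar)
    -- `j'` descends to a smooth covering map `ĵ : Tᵏ × G → F`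
    (jhat : Torus k × G → F)
    (hjhat : ∀ (α : Fin k → ℝ) (g : G), jhat (toTorus α, g) = j' α g)
    (hjhatcov : IsCoveringMap jhat)
    -- the deck action `Ψ` of `(ℤ/rℤ)ᵏ` (cf. Lemma 7)
    (Ψ : (Fin k → ZMod r) → Torus k × G → Torus k × G)
    (hΨ : ∀ (u : Fin k → ℤ) (α : Fin k → ℝ) (g : G),
      Ψ (fun i => (u i : ZMod r)) (toTorus α, g) =
        (toTorus (α + fun i => (u i : ℝ) / r),
         g * (prodZPow γbar u)⁻¹ * E' fun i => (u i : ℝ) / r))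
    (hΨ0 : ∀ x, Ψ 0 x = x)
    (hΨadd : ∀ u v x, Ψ (u + v) x = Ψ u (Ψ v x))
    (hΨdeck : ∀ u x, jhat (Ψ u x) = jhat x)
    (hΨorbits : ∀ x y, jhat x = jhat y ↔ ∃ u, Ψ u x = y)
    (ω : Fin k → ℝ)
    (T₀ : Set G) (hT₀ : T₀ = closure {g : G | ∃ t : ℝ, g = E' ((r : ℝ)⁻¹ • t • ω)})
    -- the set `K`
    (K : Set (Fin k → ZMod r))
    (hK : K = {u : Fin k → ZMod r |
      (prodPow γbar fun i => (u i).val)⁻¹ * E' (fun i => ((u i).val : ℝ) / r) ∈ T₀}) :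
    -- `K` is a subgroup of `(ℤ/rℤ)ᵏ`
    (∃ Ksub : AddSubgroup (Fin k → ZMod r), (Ksub : Set (Fin k → ZMod r)) = K) ∧
    -- `K` is exactly the set of deck transformations mapping `Tᵏ × T₀` to itself
    (K = {u : Fin k → ZMod r |
      Ψ u '' ((Set.univ : Set (Torus k)) ×ˢ T₀) = (Set.univ : Set (Torus k)) ×ˢ T₀}) ∧
    -- `ĵ` identifies `P'_{g·m̄}` with the quotient of `Tᵏ × gT₀` by the action of `K`
    ∀ g : G,
      (jhat '' ((Set.univ : Set (Torus k)) ×ˢ ((g * ·) '' T₀)) =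
        {y : F | ∃ (α : Fin k → ℝ) (h : G), h ∈ T₀ ∧ y = j' α (g * h)}) ∧
      ∀ x ∈ (Set.univ : Set (Torus k)) ×ˢ ((g * ·) '' T₀),
        ∀ y ∈ (Set.univ : Set (Torus k)) ×ˢ ((g * ·) '' T₀),
          (jhat x = jhat y ↔ ∃ u ∈ K, Ψ u x = y) := by
  haveI : NeZero r := ⟨hr.ne'⟩
  letI commA : CommGroup ↥A :=
    { (inferInstance : Group ↥A) with
      mul_comm := fun a b => Subtype.ext (hAab a a.2 b b.2) }
  set γA : Fin k → ↥A := fun i => ⟨γbar i, hγA i⟩ with hγAdef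
  have hprodZ : ∀ u : Fin k → ℤ, prodZPow γbar u = ((prodZPow γA u : ↥A) : G) := by
    intro u
    show _ = A.subtype (List.ofFn fun i => γA i ^ u i).prod
    rw [← List.prod_hom _ A.subtype, List.map_ofFn]
    unfold prodZPow
    exact congrArg List.prod (congrArg List.ofFn (funext fun i => by simp [hγAdef]))
  have hprodA : ∀ u : Fin k → ℤ, prodZPow γA u = ∏ i, γA i ^ u i := fun u => List.prod_ofFn
  have hE'neg : ∀ x, E' (-x) = (E' x)⁻¹ := by
    intro x
    have h1 : E' x * E' (-x) = 1 := by rw [← hE'add, add_neg_cancel, hE'0]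
    exact (inv_eq_of_mul_eq_one_right h1).symm
  set EA : (Fin k → ℝ) → ↥A := fun x => ⟨E' x, hE'A x⟩ with hEAdef
  have hEAadd : ∀ x y, EA (x + y) = EA x * EA y := fun x y => Subtype.ext (hE'add x y)
  set dA : (Fin k → ℤ) → ↥A :=
    fun u => (prodZPow γA u)⁻¹ * EA (fun i => (u i : ℝ) / r) with hdAdef
  have harg : ∀ u v : Fin k → ℤ,
      (fun i => (((u + v) i : ℤ) : ℝ) / r)
        = (fun i => ((u i : ℤ) : ℝ) / r) + fun i => ((v i : ℤ) : ℝ) / r := by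
    intro u v; funext i
    simp only [Pi.add_apply]
    push_cast
    ring
  have hdAadd : ∀ u v, dA (u + v) = dA u * dA v := by
    intro u v
    simp only [hdAdef]
    rw [harg, hEAadd]
    have hp : prodZPow γA (u + v) = prodZPow γA u * prodZPow γA v := by
      simp [hprodA, zpow_add, Finset.prod_mul_distrib]
    rw [hp, mul_inv]
    exact mul_mul_mul_comm _ _ _ _
  have hdA0 : dA 0 = 1 := by
    have h1 : prodZPow γA (0 : Fin k → ℤ) = 1 := by simp [hprodA]
    have h2 : (fun i => (((0 : Fin k → ℤ) i : ℤ) : ℝ) / r) = (0 : Fin k → ℝ) := by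
      funext i; simp
    simp only [hdAdef, h1, h2, inv_one, one_mul]
    exact Subtype.ext hE'0
  let Dhom : (Fin k → ℤ) →+ Additive ↥A :=
    AddMonoidHom.mk' (fun u => Additive.ofMul (dA u)) (by
      intro u v
      show Additive.ofMul (dA (u + v)) = Additive.ofMul (dA u) + Additive.ofMul (dA v)
      rw [hdAadd]
      rfl)
  have hDhom : ∀ u, Dhom u = Additive.ofMul (dA u) := fun _ => rfl
  have hsingle : ∀ i : Fin k, dA ((r : ℤ) • Pi.single i 1) = 1 := by
    intro i
    have hu : ∀ j, (((r : ℤ) • Pi.single i (1:ℤ) : Fin k → ℤ)) j = if j = i then (r:ℤ) else 0 := by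
      intro j; by_cases h : j = i <;> simp [h, Pi.single_apply]
    have h1 : prodZPow γA ((r:ℤ) • Pi.single i 1) = γA i ^ (r:ℤ) := by
      rw [hprodA, Finset.prod_eq_single i (fun j _ hj => by rw [hu j, if_neg hj, zpow_zero])
        (fun h => absurd (Finset.mem_univ i) h)]
      rw [hu i, if_pos rfl]
    have h2 : (fun j => (((((r:ℤ) • Pi.single i (1:ℤ) : Fin k → ℤ)) j : ℤ) : ℝ) / r) = Pi.single i 1 := by
      funext j
      by_cases h : j = i
      · subst h
        rw [hu j, if_pos rfl, Pi.single_eq_same]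
        push_cast
        field_simp
      · rw [hu j, if_neg h, Pi.single_eq_of_ne h]
        simp
    have h3 : EA (Pi.single i 1) = γA i ^ (r:ℕ) := by
      apply Subtype.ext
      simp [hEAdef, hE'γ i, hγAdef]
    simp only [hdAdef, h1, h2, h3]
    rw [← zpow_natCast (γA i) r]
    exact inv_mul_cancel _
  have hmul_r : ∀ w : Fin k → ℤ, dA (fun i => (r:ℤ) * w i) = 1 := by
    intro w
    have hw : (fun i => (r:ℤ) * w i) = ∑ i, w i • ((r:ℤ) • Pi.single i 1) := by
      funext j
      rw [Finset.sum_apply]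
      have : ∀ i, ((w i • ((r:ℤ) • Pi.single i (1:ℤ)) : Fin k → ℤ)) j
          = if i = j then (r:ℤ) * w i else 0 := by
        intro i
        by_cases h : i = j <;> simp [h, Pi.single_apply, mul_comm]
      rw [Finset.sum_congr rfl fun i _ => this i, Finset.sum_ite_eq']
      simp
    have hzero : Dhom (fun i => (r:ℤ) * w i) = 0 := by
      rw [hw, map_sum]
      refine Finset.sum_eq_zero fun i _ => ?_
      rw [map_zsmul]
      have : Dhom ((r:ℤ) • Pi.single i 1) = 0 := by
        rw [hDhom, hsingle i]; rfl
      rw [this, smul_zero]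
    have := congrArg Additive.toMul hzero
    simpa [hDhom] using this
  have hkey : ∀ u v : Fin k → ℤ, (∀ i, ((u i : ZMod r)) = (v i : ZMod r)) → dA u = dA v := by
    intro u v h
    have hdvd : ∀ i, ((r:ℤ)) ∣ (u i - v i) := by
      intro i
      have : ((u i - v i : ℤ) : ZMod r) = 0 := by push_cast; rw [h i]; ring
      exact (ZMod.intCast_zmod_eq_zero_iff_dvd _ _).mp this
    choose w hw using hdvd
    have hu : u = v + fun i => (r:ℤ) * w i := by
      funext i
      have := hw i
      simp only [Pi.add_apply]
      linarith
    rw [hu, hdAadd, hmul_r, mul_one]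
  have hlift : ∀ x : ZMod r, (((x.val : ℤ)) : ZMod r) = x := by
    intro x
    rw [Int.cast_natCast, ZMod.natCast_val, ZMod.cast_id]
  set dbar : (Fin k → ZMod r) → ↥A := fun u => dA fun i => ((u i).val : ℤ) with hdbardef
  have hdbar_add : ∀ a b, dbar (a + b) = dbar a * dbar b := by
    intro a b
    have h1 : dA (fun i => (((a + b) i).val : ℤ))
        = dA ((fun i => ((a i).val : ℤ)) + fun i => ((b i).val : ℤ)) := by
      apply hkey
      intro i
      simp only [Pi.add_apply, Int.cast_add, hlift]
    simp only [hdbardef]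
    rw [h1, hdAadd]
  have hdbar0 : dbar 0 = 1 := by
    have h0 : (fun i => (((0 : Fin k → ZMod r) i).val : ℤ)) = (0 : Fin k → ℤ) := by
      funext i; simp [ZMod.val_zero]
    simp only [hdbardef, h0, hdA0]
  have hdbar_neg : ∀ a, dbar (-a) = (dbar a)⁻¹ := by
    intro a
    have h1 : dbar (-a) * dbar a = 1 := by rw [← hdbar_add, neg_add_cancel, hdbar0]
    exact eq_inv_of_mul_eq_one_left h1
  -- `T₀` is a subgroup
  let Ssub : Subgroup G :=
    { carrier := {g : G | ∃ t : ℝ, g = E' ((r : ℝ)⁻¹ • t • ω)}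
      one_mem' := ⟨0, by rw [zero_smul, smul_zero, hE'0]⟩
      mul_mem' := by
        rintro a b ⟨s, rfl⟩ ⟨t, rfl⟩
        exact ⟨s + t, by rw [← hE'add, ← smul_add, ← add_smul]⟩
      inv_mem' := by
        rintro a ⟨t, rfl⟩
        exact ⟨-t, by rw [neg_smul, smul_neg, hE'neg]⟩ }
  let Tsub := Ssub.topologicalClosure
  have hT₀' : T₀ = (Tsub : Set G) := by
    rw [hT₀]; rfl
  have hT1 : (1:G) ∈ T₀ := by rw [hT₀']; exact Tsub.one_mem
  have hTmul : ∀ a b : G, a ∈ T₀ → b ∈ T₀ → a * b ∈ T₀ := by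
    intro a b ha hb
    rw [hT₀'] at *
    exact Tsub.mul_mem ha hb
  have hTinv : ∀ a : G, a ∈ T₀ → a⁻¹ ∈ T₀ := by
    intro a ha
    rw [hT₀'] at *
    exact Tsub.inv_mem ha
  -- `K` in terms of `dbar`
  have hdZcoe : ∀ u : Fin k → ℤ,
      (prodZPow γbar u)⁻¹ * E' (fun i => ((u i : ℤ) : ℝ) / r) = ((dA u : ↥A) : G) := by
    intro u
    rw [hprodZ]
    simp [hdAdef, hEAdef]
  have hdZbar : ∀ u : Fin k → ZMod r,
      (prodPow γbar fun i => (u i).val)⁻¹ * E' (fun i => ((u i).val : ℝ) / r)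
        = ((dbar u : ↥A) : G) := by
    intro u
    have h1 : prodPow γbar (fun i => (u i).val)
        = prodZPow γbar (fun i => ((u i).val : ℤ)) := by
      unfold prodPow prodZPow
      exact congrArg List.prod (congrArg List.ofFn (funext fun i => (zpow_natCast _ _).symm))
    have h2 : (fun i => ((u i).val : ℝ) / r)
        = fun i => (((((u i).val : ℤ)) : ℤ) : ℝ) / r := by
      funext i; norm_num
    rw [h1, h2, hdZcoe]
  have hKmem : ∀ u : Fin k → ZMod r, u ∈ K ↔ ((dbar u : ↥A) : G) ∈ T₀ := by
    intro u
    rw [hK]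
    simp only [Set.mem_setOf_eq, hdZbar]
  -- `Ψ` in terms of `dbar`
  have hΨ' : ∀ (u : Fin k → ZMod r) (α : Fin k → ℝ) (g : G),
      Ψ u (toTorus α, g) =
        (toTorus (α + fun i => ((u i).val : ℝ) / r), g * ((dbar u : ↥A) : G)) := by
    intro u α g
    have h0 : (fun i => ((((u i).val : ℤ)) : ZMod r)) = u := by funext i; exact hlift _
    have h := hΨ (fun i => ((u i).val : ℤ)) α g
    rw [h0] at h
    rw [h, mul_assoc, hdZcoe]
    have h2 : (fun i => ((((u i).val : ℤ)) : ℝ) / r) = fun i => ((u i).val : ℝ) / r := by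
      funext i; norm_num
    rw [h2]
  refine ⟨?_, ?_, ?_⟩
  · -- Part 1 : K is a subgroup
    refine ⟨{ carrier := K
              zero_mem' := ?_
              add_mem' := ?_
              neg_mem' := ?_ }, rfl⟩
    · intro a b ha hb
      refine (hKmem _).mpr ?_
      rw [hdbar_add]
      push_cast
      exact hTmul _ _ ((hKmem a).mp ha) ((hKmem b).mp hb)
    · refine (hKmem 0).mpr ?_
      rw [hdbar0]
      simpa using hT1
    · intro a ha
      refine (hKmem _).mpr ?_
      rw [hdbar_neg]
      push_cast
      exact hTinv _ ((hKmem a).mp ha)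
  · -- Part 2
    ext u
    rw [hKmem, Set.mem_setOf_eq]
    constructor
    · intro hd
      apply Set.Subset.antisymm
      · rintro _ ⟨⟨θ, h⟩, ⟨-, hh⟩, rfl⟩
        obtain ⟨α, rfl⟩ := toTorus_surjective θ
        rw [hΨ']
        exact ⟨Set.mem_univ _, hTmul _ _ hh hd⟩
      · rintro ⟨θ', h'⟩ ⟨-, hh'⟩
        obtain ⟨α', rfl⟩ := toTorus_surjective θ'
        refine ⟨(toTorus (α' - fun i => ((u i).val : ℝ) / r), h' * ((dbar u : ↥A) : G)⁻¹),
          ⟨Set.mem_univ _, hTmul _ _ hh' (hTinv _ hd)⟩, ?_⟩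
        rw [hΨ', sub_add_cancel, inv_mul_cancel_right]
    · intro hEq
      have hx0 : ((toTorus (0 : Fin k → ℝ), (1:G)) : Torus k × G)
          ∈ (Set.univ : Set (Torus k)) ×ˢ T₀ := ⟨Set.mem_univ _, hT1⟩
      have hmem : Ψ u (toTorus 0, 1) ∈ (Set.univ : Set (Torus k)) ×ˢ T₀ :=
        hEq ▸ Set.mem_image_of_mem _ hx0
      rw [hΨ'] at hmem
      simpa using hmem.2
  · -- Part 3
    intro g
    constructor
    · ext y
      constructor
      · rintro ⟨⟨θ, x⟩, ⟨-, ⟨h, hh, rfl⟩⟩, rfl⟩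
        obtain ⟨α, rfl⟩ := toTorus_surjective θ
        exact ⟨α, h, hh, hjhat α (g * h)⟩
      · rintro ⟨α, h, hh, rfl⟩
        exact ⟨(toTorus α, g * h), ⟨Set.mem_univ _, ⟨h, hh, rfl⟩⟩, hjhat α (g * h)⟩
    · rintro ⟨θx, x2⟩ ⟨-, ⟨hx, hhx, rfl⟩⟩ ⟨θy, y2⟩ ⟨-, ⟨hy, hhy, rfl⟩⟩
      obtain ⟨α, rfl⟩ := toTorus_surjective θx
      obtain ⟨β, rfl⟩ := toTorus_surjective θy
      constructor
      · intro hjeq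
        obtain ⟨u, hu⟩ := (hΨorbits _ _).mp hjeq
        refine ⟨u, ?_, hu⟩
        rw [hΨ'] at hu
        have h2 : g * hx * ((dbar u : ↥A) : G) = g * hy := congrArg Prod.snd hu
        rw [mul_assoc] at h2
        have h4 : hx * ((dbar u : ↥A) : G) = hy := mul_left_cancel h2
        have h3 : ((dbar u : ↥A) : G) = hx⁻¹ * hy := by
          rw [← h4, inv_mul_cancel_left]
        refine (hKmem u).mpr ?_
        rw [h3]
        exact hTmul _ _ (hTinv _ hhx) hhy
      · rintro ⟨u, -, hu⟩
        rw [← hu]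
        exact (hΨdeck u _).symm
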